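/- Let R be a commutative ring and q ∈ R. For pairs x = (n,m), y = (l,k) of natural numbers, set c(x,y) := q^{m·l} - q^{n·k}. Then for all pairs x = (n,m), y = (l,k), z = (a,b) of natural numbers: c(x,y)·c(x+y, z) + c(y,z)·c(y+z, x) + c(z,x)·c(z+x, y) = 0, where addition of pairs is componentwise. -/
import Mathlib

/-- Structure constants of the positive half of the quantum torus algebra:
`c((n,m),(l,k)) = q^{m l} - q^{n k}`. -/
def qtStructureConstant {R : Type*} [CommRing R] (q : R) (x y : ℕ × ℕ) : R :=
  q ^ (x.2 * y.1) - q ^ (x.1 * y.2)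

/-- Jacobi identity for the structure constants of the quantum torus algebra:
`c(x,y) c(x+y,z) + c(y,z) c(y+z,x) + c(z,x) c(z+x,y) = 0`. -/
theorem qtStructureConstant_jacobi {R : Type*} [CommRing R] (q : R) (x y z : ℕ × ℕ) :
    qtStructureConstant q x y * qtStructureConstant q (x + y) z +
      qtStructureConstant q y z * qtStructureConstant q (y + z) x +
      qtStructureConstant q z x * qtStructureConstant q (z + x) y = 0 := by
  obtain ⟨n, m⟩ := x; obtain ⟨l, k⟩ := y; obtain ⟨a, b⟩ := z
  simp only [qtStructureConstant, Prod.mk_add_mk]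
  simp only [add_mul, mul_add, pow_add]
  ring
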